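/- (Out-degrees in the chase) Let Q be a set of s-pider queries and consider Chase(T_Q, green full s-pider). Every knee has out-degree 1. Every head of a red s-pider has out-degree exactly 1 with respect to each red relation T_i and each red T^i, and out-degree 0 with respect to every other binary relation; symmetrically for green heads with colors reversed. -/

import Mathlib

/-!  A general framework for relational structures, conjunctive queries,
tuple generating dependencies (TGDs), and the chase, following
Gogacz–Marcinkowski, "The Hunt for a Red Spider: Conjunctive Query
Determinacy Is Undecidable". -/

namespace CQD

/-- A relational structure over relation symbols `R` and domain `D`:
a set of atoms, each a relation symbol together with its tuple of arguments. -/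
abbrev Struc (R D : Type*) := Set (R × List D)

/-- Map a structure along a function on domain elements. -/
def smap {R D E : Type*} (h : D → E) (S : Struc R D) : Struc R E :=
  (fun a => (a.1, a.2.map h)) '' S

/-- Terms over constants `K`: variables (natural numbers) or constants. -/
abbrev Term (K : Type*) := ℕ ⊕ K

/-- A conjunction of atoms over variables and constants from `K`. -/
abbrev Conj (R K : Type*) := Struc R (Term K)

/-- `h` is a homomorphism from the conjunction `Φ` into the structure `S`,
where the constants are interpreted by `ι`. -/
def IsHom {R K D : Type*} (Φ : Conj R K) (S : Struc R D) (ι : K → D) (h : ℕ → D) : Prop :=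
  ∀ a ∈ Φ, (a.1, a.2.map (Sum.elim h ι)) ∈ S

/-- A tuple-generating dependency `∀ x̄ ȳ (body(x̄,ȳ) → ∃ z̄ head(z̄,ȳ))`;
`frontier` is the set of universally quantified variables `ȳ` shared by body and head. -/
structure TGD (R K : Type*) where
  body : Conj R K
  head : Conj R K
  frontier : Set ℕ

/-- `Φ` holds in `S` at the tuple `b` (given on the frontier variables `fr`). -/
def holdsAt {R K D : Type*} (Φ : Conj R K) (fr : Set ℕ) (S : Struc R D) (ι : K → D)
    (b : ℕ → D) : Prop :=
  ∃ h : ℕ → D, IsHom Φ S ι h ∧ ∀ y ∈ fr, h y = b y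

/-- A structure satisfies a TGD in the usual first-order sense. -/
def TGD.sat {R K D : Type*} (T : TGD R K) (S : Struc R D) (ι : K → D) : Prop :=
  ∀ b, holdsAt T.body T.frontier S ι b → holdsAt T.head T.frontier S ι b

/-- The `ToDo` set: pairs `⟨b̄, T⟩` whose body is satisfied at `b̄` but which still
lack a witness for the head. -/
def ToDo {R K D : Type*} (𝒯 : Set (TGD R K)) (S : Struc R D) (ι : K → D) :
    Set ((ℕ → D) × TGD R K) :=
  {p | p.2 ∈ 𝒯 ∧ holdsAt p.2.body p.2.frontier S ι p.1 ∧
       ¬ holdsAt p.2.head p.2.frontier S ι p.1}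

/-- The active domain of a structure. -/
def adom {R D : Type*} (S : Struc R D) : Set D := {d | ∃ a ∈ S, d ∈ a.2}

/-- `S'` is the result of one application `T(S, b̄)` of the TGD `T` to `S` at tuple `b̄`:
a fresh copy of the head is added, its frontier variables identified with `b̄`. -/
def IsStep {R K D : Type*} (T : TGD R K) (S : Struc R D) (ι : K → D) (b : ℕ → D)
    (S' : Struc R D) : Prop :=
  ∃ g : ℕ → D,
    (∀ y ∈ T.frontier, g y = b y) ∧
    (∀ x ∉ T.frontier, g x ∉ adom S ∧ g x ∉ Set.range ι) ∧
    Set.InjOn g {x | x ∉ T.frontier} ∧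
    S' = S ∪ smap (Sum.elim g ι) T.head

/-- Union of the stages strictly below `i`. -/
def partUnion {X : Type*} (seq : Ordinal.{0} → Set X) (i : Ordinal.{0}) : Set X :=
  ⋃ j ∈ Set.Iio i, seq j

/-- A fair chase sequence for the set `𝒯` of TGDs starting from `D0`. -/
structure ChaseSeq {R K D : Type*} (𝒯 : Set (TGD R K)) (D0 : Struc R D) (ι : K → D) where
  len : Ordinal.{0}
  pos : 0 < len
  seq : Ordinal.{0} → Struc R D
  init : seq 0 = D0
  step : ∀ i, 0 < i → i < len →
    ∃ p ∈ ToDo 𝒯 (partUnion seq i) ι, IsStep p.2 (partUnion seq i) ι p.1 (seq i)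
  fair : ∀ i < len, ∀ p ∈ ToDo 𝒯 (partUnion seq i) ι,
    ∃ k, i < k ∧ k ≤ len ∧ p ∉ ToDo 𝒯 (partUnion seq k) ι

/-- The result of a chase sequence: the union of all its stages. -/
def ChaseSeq.result {R K D : Type*} {𝒯 : Set (TGD R K)} {D0 : Struc R D} {ι : K → D}
    (C : ChaseSeq 𝒯 D0 ι) : Struc R D := partUnion C.seq C.len

/-- `S` is (the result of) a chase of `𝒯` over `D0`. -/
def IsChase {R K D : Type*} (𝒯 : Set (TGD R K)) (D0 : Struc R D) (ι : K → D)
    (S : Struc R D) : Prop :=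
  ∃ C : ChaseSeq 𝒯 D0 ι, C.result = S

/-- A conjunctive query: a conjunction of atoms with designated free variables. -/
structure CQ (R K : Type*) where
  body : Conj R K
  free : Set ℕ

/-- Colored (green/red) relation symbols: `true` = green, `false` = red. -/
abbrev CRel (R : Type*) := R × Bool

/-- Paint all atoms of a conjunction with the color `c`. -/
def paint {R K : Type*} (c : Bool) (Φ : Conj R K) : Conj (CRel R) K :=
  (fun a => ((a.1, c), a.2)) '' Φ

/-- The view `Q(S)` defined by a query with body `Φ` and free variables `fr`
over the structure `S`: the set of satisfying assignments of the free variables. -/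
def eval {R K D : Type*} (Φ : Conj R K) (fr : Set ℕ) (S : Struc R D) (ι : K → D) :
    Set (ℕ → D) :=
  {b | holdsAt Φ fr S ι b}

/-- The green-red TGD generated by `Q`, from color `c` to the opposite color
(`tgdGR true Q` is `Q^{G→R}`, `tgdGR false Q` is `Q^{R→G}`). -/
def tgdGR {R K : Type*} (c : Bool) (Q : CQ R K) : TGD (CRel R) K :=
  ⟨paint c Q.body, paint (!c) Q.body, Q.free⟩

/-- The set `𝒯_𝒬` of green-red TGDs generated by a set of conjunctive queries. -/
def TQ {R K : Type*} (𝒬 : Set (CQ R K)) : Set (TGD (CRel R) K) :=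
  {T | ∃ Q ∈ 𝒬, ∃ c : Bool, T = tgdGR c Q}

end CQD

/-! The s-pider signature, ideal s-piders, s-pider queries and the s-pider chase. -/

namespace Spider

open CQD

/-- Relation symbols of the s-pider signature: a ternary `H`, thighs `T_i, T^i`
and calves `C_i, C^i` (all binary). -/
inductive SpRel (s : ℕ) : Type
  | H : SpRel s
  | Tlo : Fin s → SpRel s
  | Tup : Fin s → SpRel s
  | Clo : Fin s → SpRel s
  | Cup : Fin s → SpRel s

/-- Constants `c_i` (left) and `c^i` (right). -/
abbrev SpK (s : ℕ) := Fin s ⊕ Fin s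

abbrev SpTerm (s : ℕ) := CQD.Term (SpK s)

/-- The head variable `z`. -/
def vz (s : ℕ) : SpTerm s := Sum.inl 0
/-- The tail variable `z₁`. -/
def vtail (s : ℕ) : SpTerm s := Sum.inl 1
/-- The antenna variable `z₂`. -/
def vant (s : ℕ) : SpTerm s := Sum.inl 2
/-- The lower knee variable `x_i`. -/
def vx (s : ℕ) (i : Fin s) : SpTerm s := Sum.inl (2 * (i : ℕ) + 3)
/-- The upper knee variable `y_i`. -/
def vy (s : ℕ) (i : Fin s) : SpTerm s := Sum.inl (2 * (i : ℕ) + 4)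
/-- The constant `c_i`. -/
def clo (s : ℕ) (i : Fin s) : SpTerm s := Sum.inr (Sum.inl i)
/-- The constant `c^i`. -/
def cup (s : ℕ) (i : Fin s) : SpTerm s := Sum.inr (Sum.inr i)

/-- The conjunction `Φ_s`:
`H(z,z₁,z₂) ∧ ⋀ᵢ T_i(z,x_i) ∧ T^i(z,y_i) ∧ C_i(x_i,c_i) ∧ C^i(y_i,c^i)`. -/
def Phi (s : ℕ) : Conj (SpRel s) (SpK s) :=
  {(SpRel.H, [vz s, vtail s, vant s])} ∪
  ⋃ i : Fin s,
    ({(SpRel.Tlo i, [vz s, vx s i]), (SpRel.Tup i, [vz s, vy s i]),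
      (SpRel.Clo i, [vx s i, clo s i]), (SpRel.Cup i, [vy s i, cup s i])} :
      Set (SpRel s × List (SpTerm s)))

/-- The ideal s-pider of color `c` with (empty-or-singleton) upper lame index `I`
and lower lame index `J`: the `c`-colored `Φ_s` with the calf atoms indexed by `I`
and `J` recolored to the opposite color. -/
def idealSp (s : ℕ) (c : Bool) (I J : Option (Fin s)) :
    Struc (CRel (SpRel s)) (SpTerm s) :=
  {((SpRel.H, c), [vz s, vtail s, vant s])} ∪
  ⋃ i : Fin s,
    ({((SpRel.Tlo i, c), [vz s, vx s i]), ((SpRel.Tup i, c), [vz s, vy s i]),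
      ((SpRel.Clo i, if J = some i then !c else c), [vx s i, clo s i]),
      ((SpRel.Cup i, if I = some i then !c else c), [vy s i, cup s i])} :
      Set (CRel (SpRel s) × List (SpTerm s)))

/-- The s-pider query `f^I_J`: the conjunction `Φ_s` with the calves indexed by
`I` (upper) and `J` (lower) removed; its free variables are the corresponding knees. -/
def spq (s : ℕ) (I J : Option (Fin s)) : CQ (SpRel s) (SpK s) where
  body := Phi s \
    ({a | ∃ i ∈ I, a = (SpRel.Cup i, [vy s i, cup s i])} ∪
     {a | ∃ j ∈ J, a = (SpRel.Clo j, [vx s j, clo s j])})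
  free := {n | (∃ i ∈ I, n = 2 * (i : ℕ) + 4) ∨ (∃ j ∈ J, n = 2 * (j : ℕ) + 3)}

/-- The set `𝔽_s` of s-pider queries (1-lame and 2-lame). -/
def SpiderQs (s : ℕ) : Set (CQ (SpRel s) (SpK s)) :=
  {q | ∃ I J : Option (Fin s), (I.isSome ∨ J.isSome) ∧ q = spq s I J}

/-- The interpretation of the constants in the canonical domain. -/
def spι (s : ℕ) : SpK s → SpTerm s := Sum.inr

/-- `S` is (the result of) a chase of the green-red TGDs generated by `𝒬`,
starting from the ideal green full s-pider. -/
def SpChase (s : ℕ) (𝒬 : Set (CQ (SpRel s) (SpK s)))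
    (S : Struc (CRel (SpRel s)) (SpTerm s)) : Prop :=
  IsChase (TQ 𝒬) (idealSp s true none none) (spι s) S

/-- `x ⊆ y` for empty-or-singleton sets coded as `Option`. -/
def osub {s : ℕ} (x y : Option (Fin s)) : Prop := ∀ i : Fin s, x = some i → y = some i

/-- `y ∖ x` for empty-or-singleton sets coded as `Option` (assuming `x ⊆ y`). -/
def odiff {s : ℕ} (y x : Option (Fin s)) : Option (Fin s) :=
  match x with | none => y | some _ => none

/-- A copy of the canonical structure `T0` occurs inside `S` (an injective
renaming of vertices which fixes the constants). -/
def CopyIn {s : ℕ} {V : Type*} (T0 : Struc (CRel (SpRel s)) (SpTerm s))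
    (ι : SpK s → V) (S : Struc (CRel (SpRel s)) V) : Prop :=
  ∃ m : SpTerm s → V, Set.InjOn m (adom T0) ∧ (∀ k, m (Sum.inr k) = ι k) ∧
    smap m T0 ⊆ S

/-- `𝒮` is an isomorphic copy of the canonical structure `T0`. -/
def IsCopy {s : ℕ} {V : Type*} (T0 : Struc (CRel (SpRel s)) (SpTerm s))
    (ι : SpK s → V) (𝒮 : Struc (CRel (SpRel s)) V) : Prop :=
  ∃ m : SpTerm s → V, Set.InjOn m (adom T0) ∧ (∀ k, m (Sum.inr k) = ι k) ∧
    smap m T0 = 𝒮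

/-- Erase the colors of a colored structure. -/
def dalt {s : ℕ} {V : Type*} (S : Struc (CRel (SpRel s)) V) : Struc (SpRel s) V :=
  (fun a => (a.1.1, a.2)) '' S

/-- `𝒮` is a real s-pider in `S`: a minimal substructure whose daltonisation
satisfies `Φ_s`. -/
def RealSpider {s : ℕ} {V : Type*} (S 𝒮 : Struc (CRel (SpRel s)) V)
    (ι : SpK s → V) : Prop :=
  𝒮 ⊆ S ∧ (∃ h, IsHom (Phi s) (dalt 𝒮) ι h) ∧
    ∀ 𝒮' ⊂ 𝒮, ¬ ∃ h, IsHom (Phi s) (dalt 𝒮') ι h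

/-- Abstract ideal s-piders: a color and the two lame indices.  `𝔸_s`. -/
abbrev ISp (s : ℕ) := Bool × Option (Fin s) × Option (Fin s)

/-- The canonical structure of an abstract ideal s-pider. -/
def idealOf (s : ℕ) (p : ISp s) : Struc (CRel (SpRel s)) (SpTerm s) :=
  idealSp s p.1 p.2.1 p.2.2

/-- The zoo: all ideal s-piders isomorphic to some real s-pider in `S`. -/
def zoo {s : ℕ} (S : Struc (CRel (SpRel s)) (SpTerm s)) : Set (ISp s) :=
  {p | ∃ 𝒮, RealSpider S 𝒮 (spι s) ∧ IsCopy (idealOf s p) (spι s) 𝒮}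

/-- Closure of a set of abstract ideal s-piders under the partial functions
`f^I_J` for `(I,J) ∈ F`. -/
def ClosedUnder {s : ℕ} (F : Set (Option (Fin s) × Option (Fin s)))
    (Z : Set (ISp s)) : Prop :=
  ∀ IJ ∈ F, ∀ p ∈ Z, osub p.2.1 IJ.1 → osub p.2.2 IJ.2 →
    (!p.1, odiff IJ.1 p.2.1, odiff IJ.2 p.2.2) ∈ Z

end Spider

namespace SpiderProof
open CQD Spider

variable {s : ℕ}

/-- `a` has an incoming thigh edge in `S`. -/
def Incoming (s : ℕ) (S : Struc (CRel (SpRel s)) (SpTerm s)) (a : SpTerm s) : Prop :=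
  ∃ (c : Bool) (i : Fin s) (x : SpTerm s),
    ((SpRel.Tlo i, c), [x, a]) ∈ S ∨ ((SpRel.Tup i, c), [x, a]) ∈ S

/-- The out-degree invariant. -/
def Inv (s : ℕ) (S : Struc (CRel (SpRel s)) (SpTerm s)) : Prop :=
  (∀ a : SpTerm s, Incoming s S a →
      (∃! p : CRel (SpRel s) × SpTerm s, (p.1, [a, p.2]) ∈ S) ∧
      (∀ (c : Bool) (t u : SpTerm s), ((SpRel.H, c), [a, t, u]) ∉ S)) ∧
  (∀ (c : Bool) (a t u : SpTerm s), ((SpRel.H, c), [a, t, u]) ∈ S →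
      (∀ i : Fin s,
        (∃! b : SpTerm s, ((SpRel.Tlo i, c), [a, b]) ∈ S) ∧
        (∃! b : SpTerm s, ((SpRel.Tup i, c), [a, b]) ∈ S)) ∧
      (∀ (r : CRel (SpRel s)) (b : SpTerm s), (r, [a, b]) ∈ S →
        ∃ i : Fin s, r = (SpRel.Tlo i, c) ∨ r = (SpRel.Tup i, c)))

lemma mem_Phi {a : SpRel s × List (SpTerm s)} :
    a ∈ Phi s ↔ a = (SpRel.H, [vz s, vtail s, vant s]) ∨
      ∃ i : Fin s, a = (SpRel.Tlo i, [vz s, vx s i]) ∨ a = (SpRel.Tup i, [vz s, vy s i]) ∨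
        a = (SpRel.Clo i, [vx s i, clo s i]) ∨ a = (SpRel.Cup i, [vy s i, cup s i]) := by
  simp [Phi, Set.mem_iUnion]

lemma mem_spq_free {I J : Option (Fin s)} {n : ℕ} :
    n ∈ (spq s I J).free ↔ (∃ i : Fin s, I = some i ∧ n = 2 * i + 4) ∨
      (∃ j : Fin s, J = some j ∧ n = 2 * j + 3) := by
  simp [spq, Option.mem_def, eq_comm]

lemma mem_spq_body {I J : Option (Fin s)} {a : SpRel s × List (SpTerm s)} :
    a ∈ (spq s I J).body ↔ a = (SpRel.H, [vz s, vtail s, vant s]) ∨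
      ∃ i : Fin s, a = (SpRel.Tlo i, [vz s, vx s i]) ∨ a = (SpRel.Tup i, [vz s, vy s i]) ∨
        (J ≠ some i ∧ a = (SpRel.Clo i, [vx s i, clo s i])) ∨
        (I ≠ some i ∧ a = (SpRel.Cup i, [vy s i, cup s i])) := by
  constructor
  · rintro ⟨hPhi, hrem⟩
    simp only [Set.mem_union, Set.mem_setOf_eq, not_or, not_exists, Option.mem_def] at hrem
    rcases mem_Phi.1 hPhi with h | ⟨i, h | h | h | h⟩
    · exact Or.inl h
    · exact Or.inr ⟨i, Or.inl h⟩
    · exact Or.inr ⟨i, Or.inr (Or.inl h)⟩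
    · refine Or.inr ⟨i, Or.inr (Or.inr (Or.inl ⟨?_, h⟩))⟩
      intro hJ
      exact hrem.2 i ⟨hJ, h⟩
    · refine Or.inr ⟨i, Or.inr (Or.inr (Or.inr ⟨?_, h⟩))⟩
      intro hI
      exact hrem.1 i ⟨hI, h⟩
  · intro h
    refine ⟨mem_Phi.2 ?_, ?_⟩
    · rcases h with h | ⟨i, h | h | ⟨_, h⟩ | ⟨_, h⟩⟩
      · exact Or.inl h
      · exact Or.inr ⟨i, Or.inl h⟩
      · exact Or.inr ⟨i, Or.inr (Or.inl h)⟩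
      · exact Or.inr ⟨i, Or.inr (Or.inr (Or.inl h))⟩
      · exact Or.inr ⟨i, Or.inr (Or.inr (Or.inr h))⟩
    · rintro (⟨i, hI, rfl⟩ | ⟨j, hJ, rfl⟩) <;>
      · rcases h with h | ⟨k, h | h | ⟨hk, h⟩ | ⟨hk, h⟩⟩ <;>
          simp_all [Prod.ext_iff, vx, vy, clo, cup]


lemma vz_free (I J : Option (Fin s)) : 0 ∉ (spq s I J).free := by
  rw [mem_spq_free]; rintro (⟨i, _, h⟩ | ⟨j, _, h⟩) <;> omega

lemma vx_free {I J : Option (Fin s)} {i : Fin s} :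
    (2 * (i : ℕ) + 3) ∈ (spq s I J).free ↔ J = some i := by
  rw [mem_spq_free]
  constructor
  · rintro (⟨k, _, h⟩ | ⟨k, hk, h⟩)
    · omega
    · have : (k : ℕ) = i := by omega
      rwa [show k = i from Fin.ext this] at hk
  · intro h; exact Or.inr ⟨i, h, rfl⟩

lemma vy_free {I J : Option (Fin s)} {i : Fin s} :
    (2 * (i : ℕ) + 4) ∈ (spq s I J).free ↔ I = some i := by
  rw [mem_spq_free]
  constructor
  · rintro (⟨k, hk, h⟩ | ⟨k, _, h⟩)
    · have : (k : ℕ) = i := by omega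
      rwa [show k = i from Fin.ext this] at hk
    · omega
  · intro h; exact Or.inl ⟨i, h, rfl⟩

/-- Explicit description of the atoms added by one chase step. -/
lemma mem_N {I J : Option (Fin s)} {d : Bool} {g : ℕ → SpTerm s}
    {a : CRel (SpRel s) × List (SpTerm s)} :
    a ∈ smap (Sum.elim g (spι s)) (paint d (spq s I J).body) ↔
      a = ((SpRel.H, d), [g 0, g 1, g 2]) ∨
      ∃ i : Fin s,
        a = ((SpRel.Tlo i, d), [g 0, g (2 * i + 3)]) ∨
        a = ((SpRel.Tup i, d), [g 0, g (2 * i + 4)]) ∨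
        (J ≠ some i ∧ a = ((SpRel.Clo i, d), [g (2 * i + 3), Sum.inr (Sum.inl i)])) ∨
        (I ≠ some i ∧ a = ((SpRel.Cup i, d), [g (2 * i + 4), Sum.inr (Sum.inr i)])) := by
  simp only [smap, paint, Set.image_image, Set.mem_image]
  constructor
  · rintro ⟨q, hq, rfl⟩
    rcases mem_spq_body.1 hq with h | ⟨i, h | h | ⟨hi, h⟩ | ⟨hi, h⟩⟩ <;> subst h
    · exact Or.inl (by simp [vz, vtail, vant])
    · exact Or.inr ⟨i, Or.inl (by simp [vz, vx])⟩
    · exact Or.inr ⟨i, Or.inr (Or.inl (by simp [vz, vy]))⟩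
    · exact Or.inr ⟨i, Or.inr (Or.inr (Or.inl ⟨hi, by simp [vx, clo, spι]⟩))⟩
    · exact Or.inr ⟨i, Or.inr (Or.inr (Or.inr ⟨hi, by simp [vy, cup, spι]⟩))⟩
  · rintro (h | ⟨i, h | h | ⟨hi, h⟩ | ⟨hi, h⟩⟩)
    · exact ⟨(SpRel.H, [vz s, vtail s, vant s]), mem_spq_body.2 (Or.inl rfl),
        by simp [vz, vtail, vant, h]⟩
    · exact ⟨(SpRel.Tlo i, [vz s, vx s i]), mem_spq_body.2 (Or.inr ⟨i, Or.inl rfl⟩),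
        by simp [vz, vx, h]⟩
    · exact ⟨(SpRel.Tup i, [vz s, vy s i]), mem_spq_body.2 (Or.inr ⟨i, Or.inr (Or.inl rfl)⟩),
        by simp [vz, vy, h]⟩
    · exact ⟨(SpRel.Clo i, [vx s i, clo s i]),
        mem_spq_body.2 (Or.inr ⟨i, Or.inr (Or.inr (Or.inl ⟨hi, rfl⟩))⟩),
        by simp [vx, clo, spι, h]⟩
    · exact ⟨(SpRel.Cup i, [vy s i, cup s i]),
        mem_spq_body.2 (Or.inr ⟨i, Or.inr (Or.inr (Or.inr ⟨hi, rfl⟩))⟩),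
        by simp [vy, cup, spι, h]⟩

lemma mem_adom_of {V : Type*} {S : Struc (CRel (SpRel s)) V} {r : CRel (SpRel s)}
    {l : List V} {x : V} (h : (r, l) ∈ S) (hx : x ∈ l) : x ∈ adom S :=
  ⟨(r, l), h, hx⟩


lemma inv_step {S : Struc (CRel (SpRel s)) (SpTerm s)} (hInv : Inv s S)
    (I J : Option (Fin s)) (d : Bool) (g : ℕ → SpTerm s)
    (hedge : ∀ n ∈ (spq s I J).free, Incoming s S (g n))
    (hfresh : ∀ x ∉ (spq s I J).free, g x ∉ adom S)
    (hinj : Set.InjOn g {x | x ∉ (spq s I J).free}) :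
    Inv s (S ∪ smap (Sum.elim g (spι s)) (paint d (spq s I J).body)) := by
  set N := smap (Sum.elim g (spι s)) (paint d (spq s I J).body) with hN
  have memN : ∀ a : CRel (SpRel s) × List (SpTerm s), a ∈ N ↔
      (a = ((SpRel.H, d), [g 0, g 1, g 2]) ∨
      ∃ i : Fin s,
        a = ((SpRel.Tlo i, d), [g 0, g (2 * i + 3)]) ∨
        a = ((SpRel.Tup i, d), [g 0, g (2 * i + 4)]) ∨
        (J ≠ some i ∧ a = ((SpRel.Clo i, d), [g (2 * i + 3), Sum.inr (Sum.inl i)])) ∨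
        (I ≠ some i ∧ a = ((SpRel.Cup i, d), [g (2 * i + 4), Sum.inr (Sum.inr i)]))) := by
    intro a; rw [hN]; exact mem_N
  have nfz : (0 : ℕ) ∉ (spq s I J).free := vz_free I J
  have nfx : ∀ i : Fin s, J ≠ some i → (2 * (i : ℕ) + 3) ∉ (spq s I J).free :=
    fun i hi h => hi (vx_free.1 h)
  have nfy : ∀ i : Fin s, I ≠ some i → (2 * (i : ℕ) + 4) ∉ (spq s I J).free :=
    fun i hi h => hi (vy_free.1 h)
  have injNat : ∀ x y : ℕ, x ∉ (spq s I J).free → y ∉ (spq s I J).free →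
      g x = g y → x = y := fun x y hx hy h => hinj hx hy h
  have f0 : g 0 ∉ adom S := hfresh 0 nfz
  have fX : ∀ i : Fin s, J ≠ some i → g (2 * i + 3) ∉ adom S :=
    fun i hi => hfresh _ (nfx i hi)
  have fY : ∀ i : Fin s, I ≠ some i → g (2 * i + 4) ∉ adom S :=
    fun i hi => hfresh _ (nfy i hi)
  -- every atom of N has a fresh first argument
  have Nfirst : ∀ (r : CRel (SpRel s)) (w : SpTerm s) (l : List (SpTerm s)),
      (r, w :: l) ∈ N → w ∉ adom S := by
    intro r w l hmem
    rcases (memN _).1 hmem with h | ⟨k, h | h | ⟨hk, h⟩ | ⟨hk, h⟩⟩ <;>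
      simp only [Prod.mk.injEq, List.cons.injEq] at h
    · rw [h.2.1]; exact f0
    · rw [h.2.1]; exact f0
    · rw [h.2.1]; exact f0
    · rw [h.2.1]; exact fX k hk
    · rw [h.2.1]; exact fY k hk
  -- atoms of N whose first argument is the fresh lower knee `g (2i+3)`
  have NatX : ∀ i : Fin s, J ≠ some i → ∀ (r : CRel (SpRel s)) (l : List (SpTerm s)),
      (r, g (2 * i + 3) :: l) ∈ N →
      r = (SpRel.Clo i, d) ∧ l = [Sum.inr (Sum.inl i)] := by
    intro i hi r l hmem
    rcases (memN _).1 hmem with h | ⟨k, h | h | ⟨hk, h⟩ | ⟨hk, h⟩⟩ <;>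
      simp only [Prod.mk.injEq, List.cons.injEq] at h
    · exact absurd (injNat _ _ (nfx i hi) nfz h.2.1) (by omega)
    · exact absurd (injNat _ _ (nfx i hi) nfz h.2.1) (by omega)
    · exact absurd (injNat _ _ (nfx i hi) nfz h.2.1) (by omega)
    · obtain rfl : k = i := by
        have := injNat _ _ (nfx i hi) (nfx k hk) h.2.1
        exact Fin.ext (by omega)
      exact ⟨h.1, h.2.2⟩
    · exact absurd (injNat _ _ (nfx i hi) (nfy k hk) h.2.1) (by omega)
  have NatY : ∀ i : Fin s, I ≠ some i → ∀ (r : CRel (SpRel s)) (l : List (SpTerm s)),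
      (r, g (2 * i + 4) :: l) ∈ N →
      r = (SpRel.Cup i, d) ∧ l = [Sum.inr (Sum.inr i)] := by
    intro i hi r l hmem
    rcases (memN _).1 hmem with h | ⟨k, h | h | ⟨hk, h⟩ | ⟨hk, h⟩⟩ <;>
      simp only [Prod.mk.injEq, List.cons.injEq] at h
    · exact absurd (injNat _ _ (nfy i hi) nfz h.2.1) (by omega)
    · exact absurd (injNat _ _ (nfy i hi) nfz h.2.1) (by omega)
    · exact absurd (injNat _ _ (nfy i hi) nfz h.2.1) (by omega)
    · exact absurd (injNat _ _ (nfy i hi) (nfx k hk) h.2.1) (by omega)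
    · obtain rfl : k = i := by
        have := injNat _ _ (nfy i hi) (nfy k hk) h.2.1
        exact Fin.ext (by omega)
      exact ⟨h.1, h.2.2⟩
  -- atoms of N whose first argument is the fresh head `g 0`
  have NatZ : ∀ (r : CRel (SpRel s)) (l : List (SpTerm s)), (r, g 0 :: l) ∈ N →
      (r = (SpRel.H, d) ∧ l = [g 1, g 2]) ∨
      (∃ i : Fin s, r = (SpRel.Tlo i, d) ∧ l = [g (2 * i + 3)]) ∨
      (∃ i : Fin s, r = (SpRel.Tup i, d) ∧ l = [g (2 * i + 4)]) := by
    intro r l hmem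
    rcases (memN _).1 hmem with h | ⟨k, h | h | ⟨hk, h⟩ | ⟨hk, h⟩⟩ <;>
      simp only [Prod.mk.injEq, List.cons.injEq] at h
    · exact Or.inl ⟨h.1, h.2.2⟩
    · exact Or.inr (Or.inl ⟨k, h.1, h.2.2⟩)
    · exact Or.inr (Or.inr ⟨k, h.1, h.2.2⟩)
    · exact absurd (injNat _ _ nfz (nfx k hk) h.2.1) (by omega)
    · exact absurd (injNat _ _ nfz (nfy k hk) h.2.1) (by omega)
  -- elements with incoming thighs already in S keep their profile
  have main1 : ∀ a : SpTerm s, Incoming s S a →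
      (∃! p : CRel (SpRel s) × SpTerm s, (p.1, [a, p.2]) ∈ S ∪ N) ∧
      (∀ (c : Bool) (t u : SpTerm s), ((SpRel.H, c), [a, t, u]) ∉ S ∪ N) := by
    intro a hin
    obtain ⟨hex, hnoH⟩ := hInv.1 a hin
    have haS : a ∈ adom S := by
      obtain ⟨c, i, x, h | h⟩ := hin
      · exact mem_adom_of h (by simp)
      · exact mem_adom_of h (by simp)
    refine ⟨?_, ?_⟩
    · obtain ⟨p, hp, hu⟩ := hex
      refine ⟨p, Or.inl hp, ?_⟩
      rintro q (hq | hq)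
      · exact hu q hq
      · exact absurd haS (Nfirst _ _ _ hq)
    · rintro c t u (h | h)
      · exact hnoH c t u h
      · exact absurd haS (Nfirst _ _ _ h)
  -- heads already in S keep their profile
  have main2 : ∀ (c : Bool) (a t u : SpTerm s), ((SpRel.H, c), [a, t, u]) ∈ S →
      (∀ i : Fin s,
        (∃! b : SpTerm s, ((SpRel.Tlo i, c), [a, b]) ∈ S ∪ N) ∧
        (∃! b : SpTerm s, ((SpRel.Tup i, c), [a, b]) ∈ S ∪ N)) ∧
      (∀ (r : CRel (SpRel s)) (b : SpTerm s), (r, [a, b]) ∈ S ∪ N →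
        ∃ i : Fin s, r = (SpRel.Tlo i, c) ∨ r = (SpRel.Tup i, c)) := by
    intro c a t u h
    obtain ⟨hTs, hAll⟩ := hInv.2 c a t u h
    have haS : a ∈ adom S := mem_adom_of h (by simp)
    refine ⟨fun i => ⟨?_, ?_⟩, ?_⟩
    · obtain ⟨b, hb, hu⟩ := (hTs i).1
      refine ⟨b, Or.inl hb, ?_⟩
      rintro b' (h' | h')
      · exact hu b' h'
      · exact absurd haS (Nfirst _ _ _ h')
    · obtain ⟨b, hb, hu⟩ := (hTs i).2
      refine ⟨b, Or.inl hb, ?_⟩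
      rintro b' (h' | h')
      · exact hu b' h'
      · exact absurd haS (Nfirst _ _ _ h')
    · rintro r b (h' | h')
      · exact hAll r b h'
      · exact absurd haS (Nfirst _ _ _ h')
  constructor
  · -- knee clause
    intro a hin
    obtain ⟨c, i, x, h | h⟩ := hin
    · rcases h with h | h
      · exact main1 a ⟨c, i, x, Or.inl h⟩
      · rcases (memN _).1 h with h' | ⟨k, h' | h' | ⟨hk, h'⟩ | ⟨hk, h'⟩⟩ <;> simp at h'
        obtain ⟨⟨hik, rfl⟩, rfl, rfl⟩ := h'
        subst hik
        by_cases hJ : J = some i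
        · exact main1 _ (hedge _ (vx_free.2 hJ))
        · refine ⟨⟨((SpRel.Clo i, c), Sum.inr (Sum.inl i)),
            Or.inr ((memN _).2 (Or.inr ⟨i, Or.inr (Or.inr (Or.inl ⟨hJ, rfl⟩))⟩)), ?_⟩, ?_⟩
          · rintro ⟨r, b⟩ (hq | hq)
            · exact absurd (mem_adom_of hq (by simp)) (fX i hJ)
            · obtain ⟨rfl, hl⟩ := NatX i hJ r [b] hq
              simp at hl
              simp [hl]
          · rintro c' t u (hq | hq)
            · exact (fX i hJ) (mem_adom_of hq (by simp))
            · exact absurd (NatX i hJ _ _ hq).1 (by simp)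
    · rcases h with h | h
      · exact main1 a ⟨c, i, x, Or.inr h⟩
      · rcases (memN _).1 h with h' | ⟨k, h' | h' | ⟨hk, h'⟩ | ⟨hk, h'⟩⟩ <;> simp at h'
        obtain ⟨⟨hik, rfl⟩, rfl, rfl⟩ := h'
        subst hik
        by_cases hI : I = some i
        · exact main1 _ (hedge _ (vy_free.2 hI))
        · refine ⟨⟨((SpRel.Cup i, c), Sum.inr (Sum.inr i)),
            Or.inr ((memN _).2 (Or.inr ⟨i, Or.inr (Or.inr (Or.inr ⟨hI, rfl⟩))⟩)), ?_⟩, ?_⟩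
          · rintro ⟨r, b⟩ (hq | hq)
            · exact absurd (mem_adom_of hq (by simp)) (fY i hI)
            · obtain ⟨rfl, hl⟩ := NatY i hI r [b] hq
              simp at hl
              simp [hl]
          · rintro c' t u (hq | hq)
            · exact (fY i hI) (mem_adom_of hq (by simp))
            · exact absurd (NatY i hI _ _ hq).1 (by simp)
  · -- head clause
    rintro c a t u (h | h)
    · exact main2 c a t u h
    · rcases (memN _).1 h with h' | ⟨k, h' | h' | ⟨hk, h'⟩ | ⟨hk, h'⟩⟩ <;> simp at h'
      obtain ⟨rfl, rfl, rfl, rfl⟩ := h'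
      refine ⟨fun i => ⟨?_, ?_⟩, ?_⟩
      · refine ⟨g (2 * i + 3), Or.inr ((memN _).2 (Or.inr ⟨i, Or.inl rfl⟩)), ?_⟩
        rintro b' (hq | hq)
        · exact absurd (mem_adom_of hq (by simp)) f0
        · rcases NatZ _ _ hq with ⟨hr, -⟩ | ⟨j, hr, hl⟩ | ⟨j, hr, hl⟩
          · exact absurd hr (by simp)
          · simp only [Prod.mk.injEq, SpRel.Tlo.injEq] at hr
            obtain ⟨rfl, -⟩ := hr
            simpa using hl
          · exact absurd hr (by simp)
      · refine ⟨g (2 * i + 4), Or.inr ((memN _).2 (Or.inr ⟨i, Or.inr (Or.inl rfl)⟩)), ?_⟩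
        rintro b' (hq | hq)
        · exact absurd (mem_adom_of hq (by simp)) f0
        · rcases NatZ _ _ hq with ⟨hr, -⟩ | ⟨j, hr, hl⟩ | ⟨j, hr, hl⟩
          · exact absurd hr (by simp)
          · exact absurd hr (by simp)
          · simp only [Prod.mk.injEq, SpRel.Tup.injEq] at hr
            obtain ⟨rfl, -⟩ := hr
            simpa using hl
      · rintro r b (hq | hq)
        · exact absurd (mem_adom_of hq (by simp)) f0
        · rcases NatZ _ _ hq with ⟨-, hl⟩ | ⟨j, hr, -⟩ | ⟨j, hr, -⟩
          · simp at hl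
          · exact ⟨j, Or.inl hr⟩
          · exact ⟨j, Or.inr hr⟩


lemma inv_empty : Inv s (∅ : Struc (CRel (SpRel s)) (SpTerm s)) := by
  constructor
  · rintro a ⟨c, i, x, h | h⟩ <;> exact absurd h (Set.notMem_empty _)
  · intro c a t u h
    exact absurd h (Set.notMem_empty _)

lemma ideal_eq : idealSp s true none none =
    (∅ : Struc (CRel (SpRel s)) (SpTerm s)) ∪
      smap (Sum.elim (Sum.inl : ℕ → SpTerm s) (spι s))
        (paint true (spq s (none : Option (Fin s)) none).body) := by
  rw [Set.empty_union]
  ext a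
  rw [mem_N]
  simp [idealSp, vz, vtail, vant, vx, vy, clo, cup, Set.mem_iUnion]

lemma inv_ideal : Inv s (idealSp s true none none) := by
  rw [ideal_eq]
  refine inv_step inv_empty none none true Sum.inl ?_ ?_ ?_
  · intro n hn
    rcases mem_spq_free.1 hn with ⟨k, hk, -⟩ | ⟨k, hk, -⟩ <;> simp at hk
  · intro x _
    simp [adom]
  · intro x _ y _ h
    exact Sum.inl.inj h

lemma mem_partUnion {seq : Ordinal.{0} → Struc (CRel (SpRel s)) (SpTerm s)} {o : Ordinal.{0}}
    {a : CRel (SpRel s) × List (SpTerm s)} :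
    a ∈ partUnion seq o ↔ ∃ j < o, a ∈ seq j := by
  simp [partUnion]

lemma inv_partUnion (seq : Ordinal.{0} → Struc (CRel (SpRel s)) (SpTerm s)) (o : Ordinal.{0})
    (hmono : ∀ j k : Ordinal.{0}, j ≤ k → k < o → seq j ⊆ seq k)
    (hinv : ∀ j < o, Inv s (seq j)) : Inv s (partUnion seq o) := by
  have hup : ∀ j k : Ordinal.{0}, j < o → k < o →
      ∃ l, l < o ∧ seq j ⊆ seq l ∧ seq k ⊆ seq l := fun j k hj hk =>
    ⟨max j k, max_lt hj hk, hmono j _ (le_max_left _ _) (max_lt hj hk),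
      hmono k _ (le_max_right _ _) (max_lt hj hk)⟩
  constructor
  · intro a hin
    obtain ⟨c, i, x, hor⟩ := hin
    have : ∃ j < o, Incoming s (seq j) a := by
      rcases hor with h | h
      · obtain ⟨j, hj, hmem⟩ := mem_partUnion.1 h
        exact ⟨j, hj, c, i, x, Or.inl hmem⟩
      · obtain ⟨j, hj, hmem⟩ := mem_partUnion.1 h
        exact ⟨j, hj, c, i, x, Or.inr hmem⟩
    obtain ⟨j, hj, hinj⟩ := this
    have hIncMono : ∀ l, seq j ⊆ seq l → Incoming s (seq l) a := by
      rintro l hsub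
      obtain ⟨c', i', x', h | h⟩ := hinj
      · exact ⟨c', i', x', Or.inl (hsub h)⟩
      · exact ⟨c', i', x', Or.inr (hsub h)⟩
    refine ⟨?_, ?_⟩
    · obtain ⟨p, hp, -⟩ := ((hinv j hj).1 a hinj).1
      refine ⟨p, mem_partUnion.2 ⟨j, hj, hp⟩, ?_⟩
      rintro q hq
      obtain ⟨k, hk, hqk⟩ := mem_partUnion.1 hq
      obtain ⟨l, hl, hjl, hkl⟩ := hup j k hj hk
      obtain ⟨w, -, huni⟩ := ((hinv l hl).1 a (hIncMono l hjl)).1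
      rw [huni q (hkl hqk), huni p (hjl hp)]
    · intro c' t u hmem
      obtain ⟨k, hk, hqk⟩ := mem_partUnion.1 hmem
      obtain ⟨l, hl, hjl, hkl⟩ := hup j k hj hk
      exact ((hinv l hl).1 a (hIncMono l hjl)).2 c' t u (hkl hqk)
  · intro c a t u hmem
    obtain ⟨j, hj, hH⟩ := mem_partUnion.1 hmem
    refine ⟨fun i => ⟨?_, ?_⟩, ?_⟩
    · obtain ⟨b, hb, -⟩ := (((hinv j hj).2 c a t u hH).1 i).1
      refine ⟨b, mem_partUnion.2 ⟨j, hj, hb⟩, ?_⟩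
      intro b' hb'
      obtain ⟨k, hk, hbk⟩ := mem_partUnion.1 hb'
      obtain ⟨l, hl, hjl, hkl⟩ := hup j k hj hk
      obtain ⟨w, -, huni⟩ := (((hinv l hl).2 c a t u (hjl hH)).1 i).1
      rw [huni b' (hkl hbk), huni b (hjl hb)]
    · obtain ⟨b, hb, -⟩ := (((hinv j hj).2 c a t u hH).1 i).2
      refine ⟨b, mem_partUnion.2 ⟨j, hj, hb⟩, ?_⟩
      intro b' hb'
      obtain ⟨k, hk, hbk⟩ := mem_partUnion.1 hb'
      obtain ⟨l, hl, hjl, hkl⟩ := hup j k hj hk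
      obtain ⟨w, -, huni⟩ := (((hinv l hl).2 c a t u (hjl hH)).1 i).2
      rw [huni b' (hkl hbk), huni b (hjl hb)]
    · intro r b hb
      obtain ⟨k, hk, hbk⟩ := mem_partUnion.1 hb
      obtain ⟨l, hl, hjl, hkl⟩ := hup j k hj hk
      exact ((hinv l hl).2 c a t u (hjl hH)).2 r b (hkl hbk)


lemma chase_mono {𝒬 : Set (CQ (SpRel s) (SpK s))}
    (C : ChaseSeq (TQ 𝒬) (idealSp s true none none) (spι s)) :
    ∀ j k : Ordinal.{0}, j ≤ k → k < C.len → C.seq j ⊆ C.seq k := by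
  intro j k hjk hk
  rcases eq_or_lt_of_le hjk with rfl | hlt
  · exact subset_rfl
  · have hk0 : 0 < k := (zero_le (a := j)).trans_lt hlt
    obtain ⟨p, -, g, -, -, -, hEq⟩ := C.step k hk0 hk
    rw [hEq]
    intro x hx
    exact Or.inl (mem_partUnion.2 ⟨j, hlt, hx⟩)

lemma inv_stage {𝒬 : Set (CQ (SpRel s) (SpK s))} (h𝒬 : 𝒬 ⊆ SpiderQs s)
    (C : ChaseSeq (TQ 𝒬) (idealSp s true none none) (spι s)) :
    ∀ i, i < C.len → Inv s (C.seq i) := by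
  intro i
  induction i using Ordinal.induction with
  | h i IH =>
  intro hi
  rcases eq_or_ne i 0 with rfl | h0
  · rw [C.init]; exact inv_ideal
  · have hi0 : 0 < i := pos_iff_ne_zero.2 h0
    obtain ⟨p, hpTodo, hstep⟩ := C.step i hi0 hi
    obtain ⟨hT𝒬, hbody, -⟩ := hpTodo
    obtain ⟨Q, hQ, c, hT⟩ := hT𝒬
    obtain ⟨I, J, -, hQeq⟩ := h𝒬 hQ
    subst hQeq
    rw [hT] at hstep hbody
    obtain ⟨g, hgfr, hgfresh, hginj, hEq⟩ := hstep
    obtain ⟨h, hh, hhb⟩ := hbody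
    have hUinv : Inv s (partUnion C.seq i) :=
      inv_partUnion _ _ (fun j k hjk hk => chase_mono C j k hjk (hk.trans hi))
        (fun j hj => IH j hj (hj.trans hi))
    rw [hEq]
    refine inv_step hUinv I J (!c) g ?_ ?_ ?_
    · intro n hn
      have hgn : g n = h n := by
        rw [hgfr n hn, hhb n hn]
      rcases mem_spq_free.1 hn with ⟨k, hk, rfl⟩ | ⟨k, hk, rfl⟩
      · have hb : ((SpRel.Tup k, c), [vz s, vy s k]) ∈ paint c (spq s I J).body :=
          ⟨(SpRel.Tup k, [vz s, vy s k]),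
            mem_spq_body.2 (Or.inr ⟨k, Or.inr (Or.inl rfl)⟩), rfl⟩
        have hmem := hh _ hb
        rw [hgn]
        exact ⟨c, k, h 0, Or.inr (by simpa [vz, vy] using hmem)⟩
      · have hb : ((SpRel.Tlo k, c), [vz s, vx s k]) ∈ paint c (spq s I J).body :=
          ⟨(SpRel.Tlo k, [vz s, vx s k]),
            mem_spq_body.2 (Or.inr ⟨k, Or.inl rfl⟩), rfl⟩
        have hmem := hh _ hb
        rw [hgn]
        exact ⟨c, k, h 0, Or.inl (by simpa [vz, vx] using hmem)⟩
    · intro x hx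
      exact (hgfresh x hx).1
    · exact hginj

end SpiderProof

open CQD Spider in
theorem chase_outdegrees (s : ℕ) (𝒬 : Set (CQD.CQ (SpRel s) (SpK s)))
    (h𝒬 : 𝒬 ⊆ SpiderQs s) (S : Struc (CRel (SpRel s)) (SpTerm s))
    (hS : SpChase s 𝒬 S) :
    (∀ a : SpTerm s,
      (∃ (c : Bool) (i : Fin s) (x : SpTerm s),
          ((SpRel.Tlo i, c), [x, a]) ∈ S ∨ ((SpRel.Tup i, c), [x, a]) ∈ S) →
      ∃! p : CRel (SpRel s) × SpTerm s, (p.1, [a, p.2]) ∈ S) ∧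
    (∀ (c : Bool) (a : SpTerm s),
      (∃ t u : SpTerm s, ((SpRel.H, c), [a, t, u]) ∈ S) →
      (∀ i : Fin s,
          (∃! b : SpTerm s, ((SpRel.Tlo i, c), [a, b]) ∈ S) ∧
          (∃! b : SpTerm s, ((SpRel.Tup i, c), [a, b]) ∈ S)) ∧
      (∀ (r : CRel (SpRel s)) (b : SpTerm s), (r, [a, b]) ∈ S →
          ∃ i : Fin s, r = (SpRel.Tlo i, c) ∨ r = (SpRel.Tup i, c))) := by
  unfold SpChase IsChase at hS
  obtain ⟨C, hC⟩ := hS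
  subst hC
  have hinvS : SpiderProof.Inv s C.result :=
    SpiderProof.inv_partUnion _ _ (fun j k hjk hk => SpiderProof.chase_mono C j k hjk hk)
      (fun j hj => SpiderProof.inv_stage h𝒬 C j hj)
  refine ⟨fun a ha => (hinvS.1 a ha).1, ?_⟩
  rintro c a ⟨t, u, h⟩
  exact hinvS.2 c a t u h
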